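/- Let L₁ = {(a²b)^{2k} : k ≥ 0} ∪ {(ab²)^{2k} : k ≥ 0} over the alphabet {a, b}. Then (ab²)³ is syntactically equivalent to ab² with respect to L₁, and (a²b)³ is syntactically equivalent to a²b with respect to L₁. -/
import Mathlib


/-- The two-letter alphabet `{a, b}`. -/
inductive AB : Type
  | a : AB
  | b : AB

/-- Words over `{a, b}`, as elements of the free monoid (the empty word is `1`). -/
abbrev Word : Type := FreeMonoid AB

/-- The letter `a` as a word. -/
def wa : Word := FreeMonoid.of AB.a

/-- The letter `b` as a word. -/
def wb : Word := FreeMonoid.of AB.b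

/-- Syntactic equivalence of `u` and `v` with respect to the language `L`:
for all (possibly empty) words `p, q`, `p·u·q ∈ L ↔ p·v·q ∈ L`. -/
def SynEq (L : Set Word) (u v : Word) : Prop :=
  ∀ p q : Word, p * u * q ∈ L ↔ p * v * q ∈ L

/-- The language `L₁ = ((a²b)²)* ∪ ((ab²)²)* = {(a²b)^(2k) : k ≥ 0} ∪ {(ab²)^(2k) : k ≥ 0}`. -/
def L1 : Set Word :=
  {w | ∃ k : ℕ, w = (wa ^ 2 * wb) ^ (2 * k)} ∪ {w | ∃ k : ℕ, w = (wa * wb ^ 2) ^ (2 * k)}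

/-- (abb)^m as a list -/
def repB : ℕ → List AB
  | 0 => []
  | n+1 => .a :: .b :: .b :: repB n

/-- (aab)^m as a list -/
def repA : ℕ → List AB
  | 0 => []
  | n+1 => .a :: .a :: .b :: repA n

theorem repB_add (m n : ℕ) : repB (m + n) = repB m ++ repB n := by
  induction m with
  | zero => simp [repB]
  | succ k ih => simpa [repB, Nat.succ_add] using ih

theorem repA_add (m n : ℕ) : repA (m + n) = repA m ++ repA n := by
  induction m with
  | zero => simp [repA]
  | succ k ih => simpa [repA, Nat.succ_add] using ih

theorem alignB : ∀ (p q : List AB) (m : ℕ),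
    p ++ (.a :: .b :: .b :: q) = repB m →
    ∃ i j, p = repB i ∧ q = repB j ∧ i + 1 + j = m
  | p, q, 0, h => by simp [repB] at h
  | [], q, m+1, h => by
    simp [repB] at h
    exact ⟨0, m, rfl, h, by omega⟩
  | [c], q, m+1, h => by simp [repB] at h
  | [c, d], q, m+1, h => by simp [repB] at h
  | c :: d :: e :: p, q, m+1, h => by
    simp only [repB, List.cons_append, List.cons.injEq] at h
    obtain ⟨rfl, rfl, rfl, h⟩ := h
    obtain ⟨i, j, hp, hq, hij⟩ := alignB p q m h
    exact ⟨i+1, j, by simp [repB, hp], hq, by omega⟩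

theorem alignA : ∀ (p q : List AB) (m : ℕ),
    p ++ (.a :: .a :: .b :: q) = repA m →
    ∃ i j, p = repA i ∧ q = repA j ∧ i + 1 + j = m
  | p, q, 0, h => by simp [repA] at h
  | [], q, m+1, h => by
    simp [repA] at h
    exact ⟨0, m, rfl, h, by omega⟩
  | [c], q, m+1, h => by simp [repA] at h
  | [c, d], q, m+1, h => by simp [repA] at h
  | c :: d :: e :: p, q, m+1, h => by
    simp only [repA, List.cons_append, List.cons.injEq] at h
    obtain ⟨rfl, rfl, rfl, h⟩ := h
    obtain ⟨i, j, hp, hq, hij⟩ := alignA p q m h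
    exact ⟨i+1, j, by simp [repA, hp], hq, by omega⟩

theorem b_cons_ne_repA (q : List AB) (m : ℕ) : AB.b :: q ≠ repA m := by
  cases m <;> simp [repA]

theorem b_cons_ne_repB (q : List AB) (m : ℕ) : AB.b :: q ≠ repB m := by
  cases m <;> simp [repB]

theorem noBinA : ∀ (p q : List AB) (m : ℕ), p ++ (.a :: .b :: .b :: q) ≠ repA m
  | p, q, 0, h => by simp [repA] at h
  | [], q, m+1, h => by simp [repA] at h
  | [c], q, m+1, h => by simp [repA] at h; exact b_cons_ne_repA q _ h.2
  | [c, d], q, m+1, h => by simp [repA] at h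
  | c :: d :: e :: p, q, m+1, h => by
    simp only [repA, List.cons_append, List.cons.injEq] at h
    exact noBinA p q m h.2.2.2

theorem noAinB : ∀ (p q : List AB) (m : ℕ), p ++ (.a :: .a :: .b :: q) ≠ repB m
  | p, q, 0, h => by simp [repB] at h
  | [], q, m+1, h => by simp [repB] at h
  | [c], q, m+1, h => by simp [repB] at h
  | [c, d], q, m+1, h => by simp [repB] at h
  | c :: d :: e :: p, q, m+1, h => by
    simp only [repB, List.cons_append, List.cons.injEq] at h
    exact noAinB p q m h.2.2.2

theorem toList_pow_B (m : ℕ) : FreeMonoid.toList ((wa * wb ^ 2) ^ m) = repB m := by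
  induction m with
  | zero => rfl
  | succ k ih =>
    rw [pow_succ, FreeMonoid.toList_mul, ih,
      show FreeMonoid.toList (wa * wb ^ 2) = repB 1 from rfl, ← repB_add]

theorem toList_pow_A (m : ℕ) : FreeMonoid.toList ((wa ^ 2 * wb) ^ m) = repA m := by
  induction m with
  | zero => rfl
  | succ k ih =>
    rw [pow_succ, FreeMonoid.toList_mul, ih,
      show FreeMonoid.toList (wa ^ 2 * wb) = repA 1 from rfl, ← repA_add]

theorem length_repB (m : ℕ) : (repB m).length = 3 * m := by
  induction m with
  | zero => rfl
  | succ k ih => simp [repB, ih]; omega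

theorem length_repA (m : ℕ) : (repA m).length = 3 * m := by
  induction m with
  | zero => rfl
  | succ k ih => simp [repA, ih]; omega

theorem stepB (P Q : List AB) :
    (∃ k, P ++ repB 1 ++ Q = repB (2 * k)) ↔ (∃ k, P ++ repB 3 ++ Q = repB (2 * k)) := by
  constructor
  · rintro ⟨k, h⟩
    obtain ⟨i, j, rfl, rfl, hij⟩ := alignB P Q (2 * k)
      (by simpa [repB, List.append_assoc] using h)
    refine ⟨k + 1, ?_⟩
    have h2 : repB i ++ repB 3 ++ repB j = repB (i + 3 + j) := by simp [repB_add]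
    rw [h2]; congr 1; omega
  · rintro ⟨k, h⟩
    have h' : (P ++ repB 2) ++ (.a :: .b :: .b :: Q) = repB (2 * k) := by
      simpa [repB, List.append_assoc] using h
    obtain ⟨i, j, hp, rfl, hij⟩ := alignB _ Q (2 * k) h'
    have hi : 2 ≤ i := by
      have := congrArg List.length hp
      simp [length_repB, repB] at this; omega
    have hp2 : P = repB (i - 2) := by
      apply List.append_cancel_right (bs := repB 2)
      rw [hp, ← repB_add]; congr 1; omega
    refine ⟨k - 1, ?_⟩
    rw [hp2, ← repB_add, ← repB_add]
    congr 1; omega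

theorem stepA (P Q : List AB) :
    (∃ k, P ++ repA 1 ++ Q = repA (2 * k)) ↔ (∃ k, P ++ repA 3 ++ Q = repA (2 * k)) := by
  constructor
  · rintro ⟨k, h⟩
    obtain ⟨i, j, rfl, rfl, hij⟩ := alignA P Q (2 * k)
      (by simpa [repA, List.append_assoc] using h)
    refine ⟨k + 1, ?_⟩
    have h2 : repA i ++ repA 3 ++ repA j = repA (i + 3 + j) := by simp [repA_add]
    rw [h2]; congr 1; omega
  · rintro ⟨k, h⟩
    have h' : (P ++ repA 2) ++ (.a :: .a :: .b :: Q) = repA (2 * k) := by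
      simpa [repA, List.append_assoc] using h
    obtain ⟨i, j, hp, rfl, hij⟩ := alignA _ Q (2 * k) h'
    have hi : 2 ≤ i := by
      have := congrArg List.length hp
      simp [length_repA, repA] at this; omega
    have hp2 : P = repA (i - 2) := by
      apply List.append_cancel_right (bs := repA 2)
      rw [hp, ← repA_add]; congr 1; omega
    refine ⟨k - 1, ?_⟩
    rw [hp2, ← repA_add, ← repA_add]
    congr 1; omega


theorem mem_L1_iff (w : Word) :
    w ∈ L1 ↔ (∃ k, FreeMonoid.toList w = repA (2 * k)) ∨
      (∃ k, FreeMonoid.toList w = repB (2 * k)) := by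
  constructor
  · rintro (⟨k, rfl⟩ | ⟨k, rfl⟩)
    · exact Or.inl ⟨k, toList_pow_A _⟩
    · exact Or.inr ⟨k, toList_pow_B _⟩
  · rintro (⟨k, h⟩ | ⟨k, h⟩)
    · exact Or.inl ⟨k, FreeMonoid.toList.injective (h.trans (toList_pow_A _).symm)⟩
    · exact Or.inr ⟨k, FreeMonoid.toList.injective (h.trans (toList_pow_B _).symm)⟩

/-- `(ab²)³ ~_{L₁} ab²` and `(a²b)³ ~_{L₁} a²b`. -/
theorem synEq_cubes :
    SynEq L1 ((wa * wb ^ 2) ^ 3) (wa * wb ^ 2) ∧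
    SynEq L1 ((wa ^ 2 * wb) ^ 3) (wa ^ 2 * wb) := by
  constructor
  · intro p q
    rw [mem_L1_iff, mem_L1_iff]
    have h3 : FreeMonoid.toList (p * (wa * wb ^ 2) ^ 3 * q) =
        FreeMonoid.toList p ++ repB 3 ++ FreeMonoid.toList q := by
      simp [FreeMonoid.toList_mul, toList_pow_B]
    have h1 : FreeMonoid.toList (p * (wa * wb ^ 2) * q) =
        FreeMonoid.toList p ++ repB 1 ++ FreeMonoid.toList q := by
      simp [FreeMonoid.toList_mul, show FreeMonoid.toList (wa * wb ^ 2) = repB 1 from rfl]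
    rw [h3, h1]
    constructor
    · rintro (⟨k, h⟩ | h)
      · exact (noBinA _ (repB 2 ++ FreeMonoid.toList q) (2 * k)
          (by simpa [repB, List.append_assoc] using h)).elim
      · exact Or.inr ((stepB _ _).mpr h)
    · rintro (⟨k, h⟩ | h)
      · exact (noBinA _ (FreeMonoid.toList q) (2 * k)
          (by simpa [repB, List.append_assoc] using h)).elim
      · exact Or.inr ((stepB _ _).mp h)
  · intro p q
    rw [mem_L1_iff, mem_L1_iff]
    have h3 : FreeMonoid.toList (p * (wa ^ 2 * wb) ^ 3 * q) =
        FreeMonoid.toList p ++ repA 3 ++ FreeMonoid.toList q := by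
      simp [FreeMonoid.toList_mul, toList_pow_A]
    have h1 : FreeMonoid.toList (p * (wa ^ 2 * wb) * q) =
        FreeMonoid.toList p ++ repA 1 ++ FreeMonoid.toList q := by
      simp [FreeMonoid.toList_mul, show FreeMonoid.toList (wa ^ 2 * wb) = repA 1 from rfl]
    rw [h3, h1]
    constructor
    · rintro (h | ⟨k, h⟩)
      · exact Or.inl ((stepA _ _).mpr h)
      · exact (noAinB _ (repA 2 ++ FreeMonoid.toList q) (2 * k)
          (by simpa [repA, List.append_assoc] using h)).elim
    · rintro (h | ⟨k, h⟩)
      · exact Or.inl ((stepA _ _).mp h)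
      · exact (noAinB _ (FreeMonoid.toList q) (2 * k)
          (by simpa [repA, List.append_assoc] using h)).elim
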